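/- arXiv:1603.05182 — 2 statements merged into one kernel-verified Lean document; each statement's English description precedes it below -/
import Mathlib

section
/- For every pattern s : I → ZMod 2 the product of gauge constraints satisfies C^s = X(s) ⊗ X_g(∂s); in particular, for every closed pattern s ∈ S the product of the local gauge constraints over the support of s reconstructs the global symmetry operator: C^s = X(s) ⊗ 1 on H_m ⊗ H_g. -/
set_option linter.unusedSectionVars false

noncomputable section

namespace GaugingFractal

/-- The sign `(-1)^t` attached to a `ZMod 2` exponent. -/
def sgn (t : ZMod 2) : ℂ := (-1 : ℂ) ^ t.val

lemma sgn_mul_self (t : ZMod 2) : sgn t * sgn t = 1 := by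
  unfold sgn
  rw [← pow_add, ← two_mul, pow_mul]
  norm_num

lemma zmodfun_add_self {K : Type*} (k : K → ZMod 2) : k + k = 0 := by
  funext j
  exact CharTwo.add_self_eq_zero _

/-- Hilbert space of qubits labelled by a finite set `K`; the computational basis
vector `e_a` is indexed by a pattern `a : K → ZMod 2`. -/
abbrev HS (K : Type*) := EuclideanSpace ℂ (K → ZMod 2)

section Single
variable {K : Type*} [Fintype K] [DecidableEq K]

/-- Pauli X operator: `X(p) e_a = e_{a+p}`. -/
def XOp (p : K → ZMod 2) : HS K →ₗ[ℂ] HS K where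
  toFun ψ := WithLp.toLp 2 (fun a => ψ (a + p))
  map_add' _ _ := rfl
  map_smul' _ _ := rfl

/-- Pauli Z operator: `Z(p) e_a = (-1)^{Σ_i p i * a i} e_a`. -/
def ZOp (p : K → ZMod 2) : HS K →ₗ[ℂ] HS K where
  toFun ψ := WithLp.toLp 2 (fun a => sgn (∑ i, p i * a i) * ψ a)
  map_add' ψ φ := by
    ext a
    exact mul_add _ _ _
  map_smul' c ψ := by
    ext a
    simp only [RingHom.id_apply, PiLp.smul_apply, PiLp.toLp_apply, smul_eq_mul]
    ring

end Single

section Pair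

variable {I J : Type*} [Fintype I] [DecidableEq I] [Fintype J] [DecidableEq J]

/-- Hilbert space of the matter qubits (labelled by `I`) tensored with the gauge
qubits (labelled by `J`): the computational basis vector indexed by `(a, b)`
realizes the tensor product `e_a ⊗ f_b`. -/
abbrev HS2 (I J : Type*) := EuclideanSpace ℂ ((I → ZMod 2) × (J → ZMod 2))

/-- `X(p) ⊗ X_g(q)` on `H_m ⊗ H_g`. -/
def XXOp (p : I → ZMod 2) (q : J → ZMod 2) : HS2 I J →ₗ[ℂ] HS2 I J where
  toFun ψ := WithLp.toLp 2 (fun ab => ψ (ab.1 + p, ab.2 + q))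
  map_add' _ _ := rfl
  map_smul' _ _ := rfl

/-- `X(p) ⊗ Z_g(q)` on `H_m ⊗ H_g`. -/
def XZOp (p : I → ZMod 2) (q : J → ZMod 2) : HS2 I J →ₗ[ℂ] HS2 I J where
  toFun ψ := WithLp.toLp 2 (fun ab => sgn (∑ j, q j * ab.2 j) * ψ (ab.1 + p, ab.2))
  map_add' ψ φ := by
    ext ab
    exact mul_add _ _ _
  map_smul' c ψ := by
    ext ab
    simp only [RingHom.id_apply, PiLp.smul_apply, PiLp.toLp_apply, smul_eq_mul]
    ring

/-- `Z(p) ⊗ X_g(q)` on `H_m ⊗ H_g`. -/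
def ZXOp (p : I → ZMod 2) (q : J → ZMod 2) : HS2 I J →ₗ[ℂ] HS2 I J where
  toFun ψ := WithLp.toLp 2 (fun ab => sgn (∑ i, p i * ab.1 i) * ψ (ab.1, ab.2 + q))
  map_add' ψ φ := by
    ext ab
    exact mul_add _ _ _
  map_smul' c ψ := by
    ext ab
    simp only [RingHom.id_apply, PiLp.smul_apply, PiLp.toLp_apply, smul_eq_mul]
    ring

/-- The flux operator `1 ⊗ Z_g(k)` on `H_m ⊗ H_g`. -/
def IZOp (k : J → ZMod 2) : HS2 I J →ₗ[ℂ] HS2 I J := XZOp 0 k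

variable (A : J → Finset I)

/-- The boundary map `∂ : (I → ZMod 2) → (J → ZMod 2)`, `(∂p)(j) = Σ_{i ∈ A j} p(i)`. -/
def bnd (p : I → ZMod 2) : J → ZMod 2 := fun j => ∑ i ∈ A j, p i

/-- The coboundary map `δ : (J → ZMod 2) → (I → ZMod 2)`, `(δk)(i) = Σ_{j : i ∈ A j} k(j)`. -/
def cobnd (k : J → ZMod 2) : I → ZMod 2 :=
  fun i => ∑ j ∈ Finset.univ.filter (fun j => i ∈ A j), k j

/-- The indicator pattern `χ_i` of a matter qubit `i`. -/
def chi (i : I) : I → ZMod 2 := Pi.single i 1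

/-- The indicator pattern `κ_j` of a gauge qubit `j`. -/
def kap (j : J) : J → ZMod 2 := Pi.single j 1

/-- The local gauge constraint `C_i = X(χ_i) ⊗ X_g(∂χ_i)`. -/
def C (i : I) : HS2 I J →ₗ[ℂ] HS2 I J := XXOp (chi i) (bnd A (chi i))

lemma XXOp_mul (p p' : I → ZMod 2) (q q' : J → ZMod 2) :
    (XXOp p q : Module.End ℂ (HS2 I J)) * XXOp p' q' = XXOp (p + p') (q + q') := by
  apply LinearMap.ext
  intro ψ
  ext ab
  show ψ (ab.1 + p + p', ab.2 + q + q') = ψ (ab.1 + (p + p'), ab.2 + (q + q'))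
  rw [add_assoc, add_assoc]

lemma C_commute (i i' : I) : Commute (C A i) (C A i') := by
  show C A i * C A i' = C A i' * C A i
  unfold C
  rw [XXOp_mul, XXOp_mul, add_comm (chi i) (chi i'),
    add_comm (bnd A (chi i)) (bnd A (chi i'))]

/-- The product of gauge constraints `C^s = Π_{i : s i = 1} C_i`. -/
def Cprod (s : I → ZMod 2) : Module.End ℂ (HS2 I J) :=
  (Finset.univ.filter fun i => s i = 1).noncommProd (fun i => C A i)
    (fun i _ j _ _ => C_commute A i j)

lemma Chalf_commute (i i' : I) :
    Commute ((2 : ℂ)⁻¹ • (1 + C A i)) ((2 : ℂ)⁻¹ • (1 + C A i')) := by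
  have h : Commute (1 + C A i) (1 + C A i') :=
    (Commute.one_left _).add_left ((Commute.one_right _).add_right (C_commute A i i'))
  exact (h.smul_left _).smul_right _

/-- The projector `P = Π_{i ∈ I} (1 + C_i)/2` onto the gauge invariant subspace. -/
def Pproj : Module.End ℂ (HS2 I J) :=
  Finset.univ.noncommProd (fun i => (2 : ℂ)⁻¹ • (1 + C A i))
    (fun i _ j _ _ => Chalf_commute A i j)

/-- `ψ ↦ ψ ⊗ f_0`, the inclusion `1_m ⊗ |f_0⟩ : H_m → H_m ⊗ H_g` determined by the
all-zeros gauge basis vector `f_0`. -/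
def incl : HS I →ₗ[ℂ] HS2 I J where
  toFun ψ := WithLp.toLp 2 (fun ab => if ab.2 = 0 then ψ ab.1 else 0)
  map_add' ψ φ := by
    ext ab
    by_cases h : ab.2 = 0 <;> simp [h]
  map_smul' c ψ := by
    ext ab
    by_cases h : ab.2 = 0 <;> simp [h]

/-- The compression `1_m ⊗ ⟨f_0| : H_m ⊗ H_g → H_m`. -/
def res0 : HS2 I J →ₗ[ℂ] HS I where
  toFun ψ := WithLp.toLp 2 (fun a => ψ (a, 0))
  map_add' _ _ := rfl
  map_smul' _ _ := rfl

/-- The state gauging map `G ψ = P (ψ ⊗ f_0)`. -/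
def Gmap : HS I →ₗ[ℂ] HS2 I J := Pproj A ∘ₗ incl

/-- The operator gauging map `𝒢[O] = Σ_{s : I → ZMod 2} C^s (O ⊗ |f_0⟩⟨f_0|) C^s`,
where `O ⊗ |f_0⟩⟨f_0| = incl ∘ O ∘ res0`. -/
def gaugeOp (O : Module.End ℂ (HS I)) : Module.End ℂ (HS2 I J) :=
  ∑ s : I → ZMod 2, Cprod A s * (incl ∘ₗ O ∘ₗ res0) * Cprod A s

/-- The joint fixed subspace `{v | C_i v = v for all i}` of the gauge constraints. -/
def fixedSub : Submodule ℂ (HS2 I J) where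
  carrier := {v | ∀ i, C A i v = v}
  add_mem' := by
    intro x y hx hy i
    rw [map_add, hx i, hy i]
  zero_mem' := by
    intro i
    simp
  smul_mem' := by
    intro c x hx i
    rw [map_smul, hx i]

/-- The symmetric subspace `{ψ | X(s) ψ = ψ for all s with ∂s = 0}` of the matter space. -/
def symmSub : Submodule ℂ (HS I) where
  carrier := {ψ | ∀ s, bnd A s = 0 → XOp s ψ = ψ}
  add_mem' := by
    intro x y hx hy s hs
    rw [map_add, hx s hs, hy s hs]
  zero_mem' := by
    intro s hs
    simp
  smul_mem' := by
    intro c x hx s hs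
    rw [map_smul, hx s hs]

/-- The cluster stabilizer `K_i = X(χ_i) ⊗ Z_g(∂χ_i)`. -/
def Kst (i : I) : Module.End ℂ (HS2 I J) := XZOp (chi i) (bnd A (chi i))

/-- The cluster stabilizer `L_j = Z(δκ_j) ⊗ X_g(κ_j)`. -/
def Lst (j : J) : Module.End ℂ (HS2 I J) := ZXOp (cobnd A (kap j)) (kap j)

/-- The disentangling circuit of controlled-X gates from each matter qubit to its
adjacent gauge qubits: `V (e_a ⊗ f_b) = e_a ⊗ f_{b + ∂a}`. -/
def Vequiv : HS2 I J ≃ₗ[ℂ] HS2 I J where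
  toFun ψ := WithLp.toLp 2 (fun ab => ψ (ab.1, ab.2 + bnd A ab.1))
  invFun ψ := WithLp.toLp 2 (fun ab => ψ (ab.1, ab.2 + bnd A ab.1))
  map_add' _ _ := rfl
  map_smul' _ _ := rfl
  left_inv ψ := by
    ext ab
    show ψ (ab.1, ab.2 + bnd A ab.1 + bnd A ab.1) = ψ ab
    rw [add_assoc, zmodfun_add_self, add_zero]
  right_inv ψ := by
    ext ab
    show ψ (ab.1, ab.2 + bnd A ab.1 + bnd A ab.1) = ψ ab
    rw [add_assoc, zmodfun_add_self, add_zero]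

/-- The circuit of controlled-Z gates along the edges of the bipartite graph:
`U (e_a ⊗ f_b) = (-1)^{Σ_j (∂a)(j)·b(j)} e_a ⊗ f_b`. -/
def Uequiv : HS2 I J ≃ₗ[ℂ] HS2 I J where
  toFun ψ := WithLp.toLp 2 (fun ab => sgn (∑ j, bnd A ab.1 j * ab.2 j) * ψ ab)
  invFun ψ := WithLp.toLp 2 (fun ab => sgn (∑ j, bnd A ab.1 j * ab.2 j) * ψ ab)
  map_add' ψ φ := by
    ext ab
    exact mul_add _ _ _
  map_smul' c ψ := by
    ext ab
    simp only [RingHom.id_apply, PiLp.smul_apply, PiLp.toLp_apply, smul_eq_mul]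
    ring
  left_inv ψ := by
    ext ab
    show sgn _ * (sgn _ * ψ ab) = ψ ab
    rw [← mul_assoc, sgn_mul_self, one_mul]
  right_inv ψ := by
    ext ab
    show sgn _ * (sgn _ * ψ ab) = ψ ab
    rw [← mul_assoc, sgn_mul_self, one_mul]

lemma XXOp_zero_zero : (XXOp (0 : I → ZMod 2) (0 : J → ZMod 2)) = (1 : Module.End ℂ (HS2 I J)) := by
  apply LinearMap.ext
  intro ψ
  ext ab
  show ψ (ab.1 + 0, ab.2 + 0) = ψ ab
  rw [add_zero, add_zero]

lemma zmod2_ne_one (t : ZMod 2) (h : ¬ t = 1) : t = 0 := by revert t; decide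

lemma bnd_add (p q : I → ZMod 2) : bnd A (p + q) = bnd A p + bnd A q := by
  funext j
  simp [bnd, Finset.sum_add_distrib]

lemma bnd_zero : bnd A (0 : I → ZMod 2) = 0 := by
  funext j; simp [bnd]

lemma Cprod_general (T : Finset I) :
    T.noncommProd (fun i => C A i) (fun i _ j _ _ => C_commute A i j)
      = XXOp (∑ i ∈ T, chi i) (bnd A (∑ i ∈ T, chi i)) := by
  induction T using Finset.cons_induction with
  | empty => exact (Finset.noncommProd_empty _ _).trans (by simp [bnd_zero, XXOp_zero_zero])
  | cons a T ha ih =>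
      refine (Finset.noncommProd_cons _ _ _ _ _).trans ?_
      rw [ih, Finset.sum_cons]
      show (C A a : Module.End ℂ (HS2 I J)) * _ = _
      rw [C, XXOp_mul, ← bnd_add]

lemma sum_chi (s : I → ZMod 2) :
    ∑ i ∈ Finset.univ.filter (fun i => s i = 1), chi i = s := by
  funext i
  rw [Finset.sum_apply]
  have hc : ∀ i' ∈ Finset.univ.filter (fun i => s i = 1),
      (chi i' : I → ZMod 2) i = if i = i' then (1 : ZMod 2) else 0 := by
    intro i' _
    simp [chi, Pi.single_apply, eq_comm]
  rw [Finset.sum_congr rfl hc, Finset.sum_ite_eq]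
  by_cases h : s i = 1
  · simp [h]
  · simp [h, zmod2_ne_one _ h]

/-- For every pattern `s`, the product of gauge constraints satisfies
`C^s = X(s) ⊗ X_g(∂s)`; in particular for every closed pattern (`∂s = 0`) it reconstructs
the global symmetry operator `X(s) ⊗ 1`. -/
theorem Cprod_eq_symmetry (A : J → Finset I) :
    (∀ s : I → ZMod 2, Cprod A s = XXOp s (bnd A s))
    ∧ (∀ s : I → ZMod 2, bnd A s = 0 → Cprod A s = XXOp s (0 : J → ZMod 2)) := by
  have main : ∀ s : I → ZMod 2, Cprod A s = XXOp s (bnd A s) := by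
    intro s
    rw [Cprod, Cprod_general, sum_chi]
  exact ⟨main, fun s hs => by rw [main s, hs]⟩

end Pair

end GaugingFractal
end
end

section
/- The kernel of the gauging map of the two-dimensional Ising model is generated by the toric-code plaquette term: in the Laurent polynomial ring R over F₂ in two variables x, y, the kernel of the R-linear map R² → R given by (f, g) ↦ (1 + y)·f + (1 + x)·g equals the image of the R-linear map R → R² given by h ↦ ((1 + x)·h, (1 + y)·h); that is, (1+y)f + (1+x)g = 0 holds if and only if there exists h ∈ R with f = (1+x)h and g = (1+y)h. -/
noncomputable section

namespace UngaugingCubicCode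

/-- The ring of Laurent polynomials over `F₂` in two invertible variables: the group
algebra of `ℤ²` over `ZMod 2`. -/
abbrev R2 : Type := AddMonoidAlgebra (ZMod 2) (ℤ × ℤ)

/-- The variable `x = monomial (1,0)`. -/
def xvar : R2 := AddMonoidAlgebra.single ((1, 0) : ℤ × ℤ) 1

/-- The variable `y = monomial (0,1)`. -/
def yvar : R2 := AddMonoidAlgebra.single ((0, 1) : ℤ × ℤ) 1

/-- The gauging map `η` of the 2D Ising model: `(f, g) ↦ (1+y)·f + (1+x)·g`. -/
def etaMap : (R2 × R2) →ₗ[R2] R2 :=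
  (LinearMap.mulLeft R2 (1 + yvar)).coprod (LinearMap.mulLeft R2 (1 + xvar))

/-- The toric-code plaquette map `σ_Z`: `h ↦ ((1+x)·h, (1+y)·h)`. -/
def sigmaZMap : R2 →ₗ[R2] (R2 × R2) :=
  (LinearMap.mulLeft R2 (1 + xvar)).prod (LinearMap.mulLeft R2 (1 + yvar))

/-! ### Auxiliary material -/

open AddMonoidAlgebra

/-- Laurent polynomials in one variable over `F₂`. -/
abbrev S1 : Type := AddMonoidAlgebra (ZMod 2) ℤ

lemma char2 {M : Type*} [AddCommMonoid M] [Module (ZMod 2) M] (a : M) : a + a = 0 := by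
  have h := two_smul (ZMod 2) a
  rw [show (2 : ZMod 2) = 0 by decide, zero_smul] at h
  exact h.symm

lemma eq_of_add_eq_zero {M : Type*} [AddCommMonoid M] [Module (ZMod 2) M] {a b : M}
    (h : a + b = 0) : a = b := by
  rw [← add_zero a, ← char2 b, ← add_assoc, h, zero_add]

/-- `x ↦ 1`, `y ↦ y`. -/
def phi : R2 →+* S1 := mapDomainRingHom (ZMod 2) (AddMonoidHom.snd ℤ ℤ)

lemma phi_single (m : ℤ × ℤ) (r : ZMod 2) : phi (single m r) = single m.2 r :=
  AddMonoidAlgebra.mapDomain_single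

/-- The ideal generated by `1 + x`. -/
def Ix : Ideal R2 := Ideal.span {1 + xvar}

/-- Quotient map by the ideal `(1+x)`. -/
def piIx : R2 →+* R2 ⧸ Ix := Ideal.Quotient.mk Ix

lemma piIx_x : piIx xvar = 1 := by
  have h0 : piIx (1 + xvar) = 0 :=
    Ideal.Quotient.eq_zero_iff_mem.mpr (Ideal.subset_span rfl)
  have hx : xvar = 1 + (1 + xvar) := by
    rw [← add_assoc, char2 (1 : R2), zero_add]
  rw [hx, map_add, map_one, h0, add_zero]

lemma piIx_key (a b : ℤ) :
    piIx (single ((a, 0) : ℤ × ℤ) 1) * piIx (single ((b, 0) : ℤ × ℤ) 1)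
      = piIx (single ((a + b, 0) : ℤ × ℤ) 1) := by
  rw [← map_mul, single_mul_single, one_mul]
  norm_num

lemma piIx_single_x (a : ℤ) : piIx (single ((a, 0) : ℤ × ℤ) 1) = 1 := by
  have hx : piIx (single ((1, 0) : ℤ × ℤ) 1) = 1 := piIx_x
  have hneg : piIx (single ((-1, 0) : ℤ × ℤ) 1) = 1 := by
    have := piIx_key (-1) 1
    rw [hx, mul_one] at this
    rw [this, show ((-1 + 1 : ℤ), (0 : ℤ)) = (0 : ℤ × ℤ) by norm_num, ← one_def, map_one]
  induction a using Int.induction_on with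
  | zero => rw [show ((0 : ℤ), (0 : ℤ)) = (0 : ℤ × ℤ) from rfl, ← one_def, map_one]
  | succ k ih => rw [← piIx_key k 1, ih, hx, mul_one]
  | pred k ih =>
      rw [show (-(k : ℤ) - 1 : ℤ) = -k + -1 by ring, ← piIx_key (-k) (-1), ih, hneg, mul_one]

lemma piIx_single (a b : ℤ) (r : ZMod 2) :
    piIx (single ((a, b) : ℤ × ℤ) r) = piIx (single ((0, b) : ℤ × ℤ) r) := by
  have h : single ((a, b) : ℤ × ℤ) r
      = single ((a, 0) : ℤ × ℤ) 1 * single ((0, b) : ℤ × ℤ) r := by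
    rw [single_mul_single, one_mul]
    norm_num
  rw [h, map_mul, piIx_single_x, one_mul]

/-- `y ↦ y`, into the quotient by `(1+x)`. -/
def psi : S1 →+* R2 ⧸ Ix :=
  piIx.comp (mapDomainRingHom (ZMod 2) (AddMonoidHom.inr ℤ ℤ))

lemma psi_comp_phi : psi.comp phi = piIx := by
  apply AddMonoidAlgebra.ringHom_ext
  · intro r
    rw [RingHom.comp_apply, show ((0 : ℤ × ℤ)) = ((0, 0) : ℤ × ℤ) from rfl, phi_single]
    simp only [psi, RingHom.comp_apply]
    rw [show (mapDomainRingHom (ZMod 2) (AddMonoidHom.inr ℤ ℤ)) (single 0 r)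
      = single ((0, 0) : ℤ × ℤ) r from AddMonoidAlgebra.mapDomain_single]
  · rintro ⟨a, b⟩
    rw [RingHom.comp_apply, phi_single]
    simp only [psi, RingHom.comp_apply]
    rw [show (mapDomainRingHom (ZMod 2) (AddMonoidHom.inr ℤ ℤ)) (single b 1)
      = single ((0, b) : ℤ × ℤ) 1 from AddMonoidAlgebra.mapDomain_single, ← piIx_single a b 1]

lemma dvd_of_phi_eq_zero {a : R2} (h : phi a = 0) : (1 + xvar) ∣ a := by
  have h1 : piIx a = 0 := by
    rw [← psi_comp_phi, RingHom.comp_apply, h, map_zero]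
  exact Ideal.mem_span_singleton.mp (Ideal.Quotient.eq_zero_iff_mem.mp h1)

lemma phi_onex : phi (1 + xvar) = 0 := by
  rw [map_add, map_one, xvar, phi_single]
  rw [show ((1 : ℤ), (0 : ℤ)).2 = (0 : ℤ) from rfl, ← one_def]
  exact char2 1

lemma phi_oney_ne : phi (1 + yvar) ≠ 0 := by
  rw [map_add, map_one, yvar, phi_single, one_def]
  intro h
  have h' : (Finsupp.single 0 1 + Finsupp.single 1 1 : ℤ →₀ ZMod 2) = 0 := congrArg AddMonoidAlgebra.coeff h
  have h2 := DFunLike.congr_fun h' 0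
  rw [Finsupp.add_apply, Finsupp.single_eq_same, Finsupp.single_eq_of_ne (by decide),
    Finsupp.coe_zero, Pi.zero_apply, add_zero] at h2
  exact one_ne_zero h2

lemma onex_ne : (1 + xvar : R2) ≠ 0 := by
  rw [xvar, one_def]
  intro h
  have h' : (Finsupp.single 0 1 + Finsupp.single ((1, 0) : ℤ × ℤ) 1 : (ℤ × ℤ) →₀ ZMod 2)
      = 0 := congrArg AddMonoidAlgebra.coeff h
  have h2 := DFunLike.congr_fun h' 0
  rw [Finsupp.add_apply, Finsupp.single_eq_same, Finsupp.single_eq_of_ne (by decide),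
    Finsupp.coe_zero, Pi.zero_apply, add_zero] at h2
  exact one_ne_zero h2

lemma key_iff (f g : R2) :
    (1 + yvar) * f + (1 + xvar) * g = 0
      ↔ ∃ h : R2, f = (1 + xvar) * h ∧ g = (1 + yvar) * h := by
  constructor
  · intro h0
    have h1 : (1 + yvar) * f = (1 + xvar) * g := eq_of_add_eq_zero h0
    have h2 : phi (1 + yvar) * phi f = 0 := by
      rw [← map_mul, h1, map_mul, phi_onex, zero_mul]
    have h3 : phi f = 0 := (mul_eq_zero.mp h2).resolve_left phi_oney_ne
    obtain ⟨h, hf⟩ := dvd_of_phi_eq_zero h3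
    refine ⟨h, hf, ?_⟩
    have h4 : (1 + xvar) * ((1 + yvar) * h) = (1 + xvar) * g := by
      rw [← h1, hf]; ring
    exact (mul_left_cancel₀ onex_ne h4).symm
  · rintro ⟨h, hf, hg⟩
    rw [hf, hg, show (1 + yvar) * ((1 + xvar) * h) = (1 + xvar) * ((1 + yvar) * h) by ring]
    exact char2 _

/-- The kernel of the gauging map of the two-dimensional Ising model is
generated by the toric-code plaquette term: `ker η = im σ_Z`; that is,
`(1+y)f + (1+x)g = 0` iff there is `h` with `f = (1+x)h` and `g = (1+y)h`. -/
theorem ising_gauging_kernel :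
    LinearMap.ker etaMap = LinearMap.range sigmaZMap
    ∧ ∀ f g : R2,
        (1 + yvar) * f + (1 + xvar) * g = 0
          ↔ ∃ h : R2, f = (1 + xvar) * h ∧ g = (1 + yvar) * h := by
  refine ⟨?_, key_iff⟩
  ext p
  obtain ⟨f, g⟩ := p
  simp only [LinearMap.mem_ker, LinearMap.mem_range, etaMap, sigmaZMap,
    LinearMap.coprod_apply, LinearMap.prod_apply, LinearMap.mulLeft_apply, Function.prod,
    Prod.mk.injEq]
  rw [key_iff f g]
  constructor
  · rintro ⟨h, hf, hg⟩
    exact ⟨h, hf.symm, hg.symm⟩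
  · rintro ⟨h, hf, hg⟩
    exact ⟨h, hf.symm, hg.symm⟩

end UngaugingCubicCode
end
end
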